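/- arXiv:2303.11871 — 2 statements merged into one kernel-verified Lean document; each statement's English description precedes it below -/
import Mathlib

section
/- Let K_1 ⊆ ℂ^{p_1} and K_2 ⊆ ℂ^{p_2} be determining compact sets, let A = (a_j) ⊆ K_1 and B = (b_j) ⊆ K_2 be sequences, and let Ω = A ⊕ B be their intertwining sequence in K = K_1 × K_2 ⊆ ℂ^{p_1+p_2}. If Ω is a pseudo Leja sequence for K with Edrei growth (M_j)_{j≥1}, then A is a pseudo Leja sequence for K_1 with Edrei growth M'_i = M_{N(i)}, where N(i) is the unique index with φ(N(i)) = (i, 0), and B is a pseudo Leja sequence for K_2 with Edrei growth M''_i = M_{N'(i)}, where N'(i) is the unique index with φ(N'(i)) = (0, i). -/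
open scoped BigOperators
open Filter

namespace PseudoLeja

/-- Graded lexicographic strict order on multi-indices in `ℕ^p`:
`α ≺ β` iff `|α| < |β|`, or `|α| = |β|` and the leftmost nonzero entry of `α - β`
is negative (i.e. at the first index where they differ, `α` is smaller). -/
def GLexLT {p : ℕ} (α β : Fin p → ℕ) : Prop :=
  (∑ i, α i) < (∑ i, β i) ∨
    ((∑ i, α i) = (∑ i, β i) ∧ ∃ k, (∀ i, i < k → α i = β i) ∧ α k < β k)

/-- `κ : ℕ → ℕ^p` is the (unique) enumeration of all multi-indices that is strictly
increasing from the usual order on `ℕ` to the graded lexicographic order. -/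
def IsGLexEnum {p : ℕ} (κ : ℕ → Fin p → ℕ) : Prop :=
  Function.Bijective κ ∧ ∀ m n : ℕ, m < n → GLexLT (κ m) (κ n)

/-- The `N`-th monomial `e_N(z) = z^{κ(N)}`. -/
noncomputable def mono {p : ℕ} (κ : ℕ → Fin p → ℕ) (N : ℕ) (z : Fin p → ℂ) : ℂ :=
  ∏ i, z i ^ κ N i

/-- Vandermonde determinant of the points `ξ 0, …, ξ (n-1)`:
`vdm κ n ξ = det [e_N(ξ_M)]_{0 ≤ M, N ≤ n-1}`. -/
noncomputable def vdm {p : ℕ} (κ : ℕ → Fin p → ℕ) (n : ℕ) (ξ : ℕ → Fin p → ℂ) : ℂ :=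
  Matrix.det (Matrix.of fun M N : Fin n => mono κ (N : ℕ) (ξ (M : ℕ)))

/-- A set `K ⊆ ℂ^p` is determining if no nonzero polynomial in `p` complex
variables vanishes identically on `K`. -/
def Determining {p : ℕ} (K : Set (Fin p → ℂ)) : Prop :=
  ∀ P : MvPolynomial (Fin p) ℂ, (∀ z ∈ K, MvPolynomial.eval z P = 0) → P = 0

/-- `h_d = C(p+d, d)`, the dimension of the space of polynomials of total degree
at most `d` in `p` variables. -/
def hdim (p d : ℕ) : ℕ := Nat.choose (p + d) d

/-- `l_d = p·C(p+d, p+1)`, the degree of the Vandermonde determinant of `h_d` points. -/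
def ldim (p d : ℕ) : ℕ := p * Nat.choose (p + d) (p + 1)

/-- `V_j(K)`, the maximal modulus of the Vandermonde determinant of `j` points of `K`. -/
noncomputable def Vsup {p : ℕ} (κ : ℕ → Fin p → ℕ) (K : Set (Fin p → ℂ)) (j : ℕ) : ℝ :=
  sSup { v : ℝ | ∃ ξ : ℕ → Fin p → ℂ, (∀ i, ξ i ∈ K) ∧ v = ‖vdm κ j ξ‖ }

/-- `(ξ_j)_{j≥0} ⊆ K` is a pseudo Leja sequence for `K` with Edrei growth `(M_j)_{j≥1}`:
`M_j ≥ 1`, `M_j·|vdm(ξ_0,…,ξ_j)| ≥ max_{z∈K} |vdm(ξ_0,…,ξ_{j-1},z)|` for `j ≥ 1`, and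
`lim_{d→∞} (max_{h_{d-1} ≤ j < h_d} M_j)^{1/d} = 1`. -/
def IsPseudoLeja {p : ℕ} (κ : ℕ → Fin p → ℕ) (K : Set (Fin p → ℂ))
    (ξ : ℕ → Fin p → ℂ) (M : ℕ → ℝ) : Prop :=
  (∀ j, ξ j ∈ K) ∧
  (∀ j, 1 ≤ j → 1 ≤ M j) ∧
  (∀ j, 1 ≤ j → ∀ z ∈ K,
    ‖vdm κ (j + 1) (Function.update ξ j z)‖ ≤
      M j * ‖vdm κ (j + 1) ξ‖) ∧
  Filter.Tendsto
    (fun d : ℕ => (sSup (M '' Set.Ico (hdim p (d - 1)) (hdim p d))) ^ ((d : ℝ)⁻¹))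
    Filter.atTop (nhds 1)

lemma glex_irrefl {p : ℕ} (α : Fin p → ℕ) : ¬ GLexLT α α := by
  rintro (h | ⟨-, k, -, hk⟩)
  · exact lt_irrefl _ h
  · exact lt_irrefl _ hk

lemma glex_asymm {p : ℕ} {α β : Fin p → ℕ} (h1 : GLexLT α β) (h2 : GLexLT β α) : False := by
  rcases h1 with h1 | ⟨e1, k1, hpre1, hk1⟩
  · rcases h2 with h2 | ⟨e2, -⟩
    · omega
    · omega
  · rcases h2 with h2 | ⟨e2, k2, hpre2, hk2⟩
    · omega
    · rcases lt_trichotomy k1 k2 with h | h | h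
      · have := hpre2 k1 h; omega
      · subst h; omega
      · have := hpre1 k2 h; omega

lemma glex_not_lt_zero {p : ℕ} (α : Fin p → ℕ) : ¬ GLexLT α (fun _ => 0) := by
  rintro (h | ⟨-, k, -, hk⟩)
  · simp at h
  · exact Nat.not_lt_zero _ hk

lemma IsGLexEnum.lt_iff {p : ℕ} {κ : ℕ → Fin p → ℕ} (hκ : IsGLexEnum κ) {m n : ℕ} :
    GLexLT (κ m) (κ n) ↔ m < n := by
  constructor
  · intro h
    by_contra hmn
    rcases Nat.lt_or_ge n m with h' | h'
    · exact glex_asymm h (hκ.2 n m h')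
    · have : n = m := le_antisymm (not_lt.mp hmn) h'
      subst this; exact glex_irrefl _ h
  · exact hκ.2 m n

lemma IsGLexEnum.zero_eq {p : ℕ} {κ : ℕ → Fin p → ℕ} (hκ : IsGLexEnum κ) :
    κ 0 = fun _ => 0 := by
  obtain ⟨n, hn⟩ := hκ.1.2 (fun _ => 0)
  rcases Nat.eq_zero_or_pos n with rfl | hpos
  · exact hn
  · exact absurd (hn ▸ hκ.2 0 n hpos) (glex_not_lt_zero _)

lemma sum_append {p₁ p₂ : ℕ} (α : Fin p₁ → ℕ) (β : Fin p₂ → ℕ) :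
    ∑ i, Fin.append α β i = (∑ i, α i) + ∑ i, β i := by
  rw [Fin.sum_univ_add]
  simp [Fin.append_left, Fin.append_right]

lemma append_eq_zero {p₁ p₂ : ℕ} {α : Fin p₁ → ℕ} {β : Fin p₂ → ℕ}
    (h : Fin.append α β = fun _ => 0) : α = (fun _ => 0) ∧ β = (fun _ => 0) := by
  constructor
  · funext i
    have := congrFun h (Fin.castAdd p₂ i)
    rwa [Fin.append_left] at this
  · funext i
    have := congrFun h (Fin.natAdd p₁ i)
    rwa [Fin.append_right] at this

lemma fin_add_cases {p₁ p₂ : ℕ} (i : Fin (p₁ + p₂)) :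
    (∃ i₁ : Fin p₁, i = Fin.castAdd p₂ i₁) ∨ (∃ i₂ : Fin p₂, i = Fin.natAdd p₁ i₂) := by
  refine Fin.addCases (fun i₁ => ?_) (fun i₂ => ?_) i
  · exact Or.inl ⟨i₁, rfl⟩
  · exact Or.inr ⟨i₂, rfl⟩

lemma glex_append_left {p₁ p₂ : ℕ} {α α' : Fin p₁ → ℕ} (β' : Fin p₂ → ℕ)
    (h : GLexLT α α') : GLexLT (Fin.append α (fun _ => 0)) (Fin.append α' β') := by
  have hs : ∑ i, Fin.append α (fun _ => (0:ℕ) : Fin p₂ → ℕ) i = ∑ i, α i := by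
    rw [sum_append]; simp
  have hs' : ∑ i, Fin.append α' β' i = (∑ i, α' i) + ∑ i, β' i := sum_append _ _
  rcases h with h | ⟨e, k, hpre, hk⟩
  · exact Or.inl (by omega)
  · rcases Nat.eq_zero_or_pos (∑ i, β' i) with hb | hb
    · refine Or.inr ⟨by omega, Fin.castAdd p₂ k, ?_, ?_⟩
      · intro i hi
        rcases fin_add_cases i with ⟨i₁, rfl⟩ | ⟨i₂, rfl⟩
        · rw [Fin.append_left, Fin.append_left]
          exact hpre i₁ (Fin.lt_def.mpr (by simpa using Fin.lt_def.mp hi))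
        · simp only [Fin.lt_def, Fin.coe_natAdd, Fin.coe_castAdd] at hi
          omega
      · rw [Fin.append_left, Fin.append_left]; exact hk
    · exact Or.inl (by omega)

lemma glex_append_right {p₁ p₂ : ℕ} {β β' : Fin p₂ → ℕ} (α' : Fin p₁ → ℕ)
    (h : GLexLT β β') : GLexLT (Fin.append (fun _ => 0) β) (Fin.append α' β') := by
  have hs : ∑ i, Fin.append (fun _ => (0:ℕ) : Fin p₁ → ℕ) β i = ∑ i, β i := by
    rw [sum_append]; simp
  have hs' : ∑ i, Fin.append α' β' i = (∑ i, α' i) + ∑ i, β' i := sum_append _ _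
  rcases h with h | ⟨e, k, hpre, hk⟩
  · exact Or.inl (by omega)
  · rcases Nat.eq_zero_or_pos (∑ i, α' i) with ha | ha
    · have hα' : ∀ i, α' i = 0 := by
        intro i
        have := Finset.sum_eq_zero_iff.mp ha
        exact this i (Finset.mem_univ i)
      refine Or.inr ⟨by omega, Fin.natAdd p₁ k, ?_, ?_⟩
      · intro i hi
        rcases fin_add_cases i with ⟨i₁, rfl⟩ | ⟨i₂, rfl⟩
        · rw [Fin.append_left, Fin.append_left, hα' i₁]
        · rw [Fin.append_right, Fin.append_right]
          exact hpre i₂ (Fin.lt_def.mpr (by simpa using Fin.lt_def.mp hi))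
      · rw [Fin.append_right, Fin.append_right]; exact hk
    · exact Or.inl (by omega)



lemma mono_of_zero {p : ℕ} {κ : ℕ → Fin p → ℕ} {N : ℕ} (h : κ N = fun _ => 0)
    (z : Fin p → ℂ) : mono κ N z = 1 := by
  simp [mono, h]

lemma vdm_zero {p : ℕ} (κ : ℕ → Fin p → ℕ) (ξ : ℕ → Fin p → ℂ) : vdm κ 0 ξ = 1 :=
  Matrix.det_fin_zero

lemma vdm_one {p : ℕ} {κ : ℕ → Fin p → ℕ} (h : κ 0 = fun _ => 0) (ξ : ℕ → Fin p → ℂ) :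
    vdm κ 1 ξ = 1 := by
  rw [vdm, Matrix.det_fin_one]
  exact mono_of_zero h _

/-- The Vandermonde matrix of the first `n+1` points of `ξ`. -/
noncomputable def vmat {p : ℕ} (κ : ℕ → Fin p → ℕ) (n : ℕ) (ξ : ℕ → Fin p → ℂ) :
    Matrix (Fin (n + 1)) (Fin (n + 1)) ℂ :=
  Matrix.of fun M N : Fin (n + 1) => mono κ (N : ℕ) (ξ (M : ℕ))

lemma vdm_succ_eq_det_vmat {p : ℕ} (κ : ℕ → Fin p → ℕ) (n : ℕ) (ξ : ℕ → Fin p → ℂ) :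
    vdm κ (n + 1) ξ = (vmat κ n ξ).det := rfl

lemma vdm_update_eq {p : ℕ} (κ : ℕ → Fin p → ℕ) (n : ℕ) (ξ : ℕ → Fin p → ℂ)
    (z : Fin p → ℂ) :
    vdm κ (n + 1) (Function.update ξ n z) =
      ((vmat κ n ξ).updateRow (Fin.last n) (fun N => mono κ (N : ℕ) z)).det := by
  rw [vdm]
  congr 1
  ext M N
  rcases eq_or_ne M (Fin.last n) with rfl | hM
  · rw [Matrix.updateRow_self]
    simp only [Matrix.of_apply, Fin.val_last]
    rw [Function.update_self]
  · rw [Matrix.updateRow_ne hM]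
    simp only [Matrix.of_apply, vmat]
    rw [Function.update_of_ne]
    intro h
    exact hM (Fin.ext (by simpa using congrArg id h))

lemma det_updateRow_finset_sum {R : Type*} [CommRing R] {n : Type*} [DecidableEq n] [Fintype n]
    (A : Matrix n n R) (j : n) {ι : Type*} (s : Finset ι) (u : ι → n → R) :
    (A.updateRow j (∑ i ∈ s, u i)).det = ∑ i ∈ s, (A.updateRow j (u i)).det := by
  classical
  induction s using Finset.induction_on with
  | empty =>
      simp only [Finset.sum_empty]
      apply Matrix.det_eq_zero_of_row_eq_zero j
      intro k
      rw [Matrix.updateRow_self]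
      rfl
  | insert _ _ hx ih =>
      rw [Finset.sum_insert hx, Matrix.det_updateRow_add, ih, Finset.sum_insert hx]




lemma det_updateRow_last_expand {n : ℕ} (A : Matrix (Fin (n+1)) (Fin (n+1)) ℂ)
    (r : Fin (n+1) → ℂ) :
    (A.updateRow (Fin.last n) r).det =
      ∑ N : Fin (n+1), (-1) ^ (n + (N : ℕ)) * r N *
        (A.submatrix Fin.castSucc N.succAbove).det := by
  rw [Matrix.det_succ_row _ (Fin.last n)]
  refine Finset.sum_congr rfl fun N _ => ?_
  have hsub : (A.updateRow (Fin.last n) r).submatrix (Fin.last n).succAbove N.succAbove =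
      A.submatrix Fin.castSucc N.succAbove := by
    ext M' N'
    rw [Fin.succAbove_last]
    simp only [Matrix.submatrix_apply]
    rw [Matrix.updateRow_ne (Fin.castSucc_lt_last M').ne]
  rw [hsub]
  simp [Fin.val_last]

lemma submatrix_vmat {p : ℕ} (κ : ℕ → Fin p → ℕ) (n : ℕ) (ξ : ℕ → Fin p → ℂ) :
    ((vmat κ n ξ).submatrix Fin.castSucc Fin.castSucc).det = vdm κ n ξ := rfl

lemma det_updateRow_basis {p : ℕ} (κ' : ℕ → Fin p → ℕ) (j : ℕ) (a : ℕ → Fin p → ℂ) :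
    ((vmat κ' j a).updateRow (Fin.last j)
      (fun N : Fin (j+1) => if (N : ℕ) = j then (1:ℂ) else 0)).det = vdm κ' j a := by
  rw [det_updateRow_last_expand]
  rw [Finset.sum_eq_single (Fin.last j)]
  · rw [Fin.succAbove_last, submatrix_vmat, Fin.val_last, if_pos rfl, mul_one,
      Even.neg_one_pow ⟨j, rfl⟩, one_mul]
  · intro N _ hN
    have : (N : ℕ) ≠ j := by
      intro h
      exact hN (Fin.ext (by rw [h, Fin.val_last]))
    rw [if_neg this, mul_zero, zero_mul]
  · intro h; exact absurd (Finset.mem_univ _) h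

lemma core {p : ℕ} (κ' : ℕ → Fin p → ℕ) (j n : ℕ)
    (A : Matrix (Fin (n+1)) (Fin (n+1)) ℂ) (w : Fin (n+1) → ℂ) (g : Fin (n+1) → ℕ)
    (hg : ∀ m, g m ≤ j) (a : ℕ → Fin p → ℂ)
    (hV : vdm κ' j a ≠ 0)
    (hD0 : ∀ m, m < j →
      (A.updateRow (Fin.last n) (fun m' => w m' * mono κ' (g m') (a m))).det = 0) :
    ∃ c : ℂ, ∀ x, (A.updateRow (Fin.last n) (fun m' => w m' * mono κ' (g m') x)).det
      = c * vdm κ' (j+1) (Function.update a j x) := by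
  classical
  set D : (Fin p → ℂ) → ℂ :=
    fun x => (A.updateRow (Fin.last n) (fun m' => w m' * mono κ' (g m') x)).det with hD
  set d : ℕ → ℂ :=
    fun i => (A.updateRow (Fin.last n) (fun m' => if g m' = i then w m' else 0)).det with hd
  set Q : (Fin p → ℂ) → ℂ := fun x => vdm κ' (j+1) (Function.update a j x) with hQ
  set q : ℕ → ℂ := fun i => ((vmat κ' j a).updateRow (Fin.last j)
      (fun N : Fin (j+1) => if (N : ℕ) = i then (1:ℂ) else 0)).det with hq
  have hDsum : ∀ x, D x = ∑ i ∈ Finset.range (j+1), mono κ' i x * d i := by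
    intro x
    have hrow : (fun m' => w m' * mono κ' (g m') x) =
        ∑ i ∈ Finset.range (j+1),
          (fun m' : Fin (n+1) => mono κ' i x * (if g m' = i then w m' else 0)) := by
      funext m'
      rw [Finset.sum_apply]
      simp only [mul_ite, mul_zero]
      rw [Finset.sum_ite_eq (Finset.range (j+1)) (g m') (fun i => mono κ' i x * w m'),
        if_pos (Finset.mem_range.mpr (Nat.lt_succ_of_le (hg m')))]
      ring
    rw [hD]
    simp only
    rw [hrow, det_updateRow_finset_sum]
    refine Finset.sum_congr rfl fun i _ => ?_
    have hsm : (fun m' : Fin (n+1) => mono κ' i x * (if g m' = i then w m' else 0)) =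
        mono κ' i x • (fun m' : Fin (n+1) => if g m' = i then w m' else 0) := rfl
    rw [hsm, Matrix.det_updateRow_smul]
  have hQsum : ∀ x, Q x = ∑ i ∈ Finset.range (j+1), mono κ' i x * q i := by
    intro x
    have hrow : (fun N : Fin (j+1) => mono κ' (N : ℕ) x) =
        ∑ i ∈ Finset.range (j+1),
          (fun N : Fin (j+1) => mono κ' i x * (if (N : ℕ) = i then (1:ℂ) else 0)) := by
      funext N
      rw [Finset.sum_apply]
      simp only [mul_ite, mul_one, mul_zero]
      rw [Finset.sum_ite_eq (Finset.range (j+1)) ((N : ℕ)) (fun i => mono κ' i x),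
        if_pos (Finset.mem_range.mpr N.isLt)]
    rw [hQ]
    simp only
    rw [vdm_update_eq, hrow, det_updateRow_finset_sum]
    refine Finset.sum_congr rfl fun i _ => ?_
    have hsm : (fun N : Fin (j+1) => mono κ' i x * (if (N : ℕ) = i then (1:ℂ) else 0)) =
        mono κ' i x • (fun N : Fin (j+1) => if (N : ℕ) = i then (1:ℂ) else 0) := rfl
    rw [hsm, Matrix.det_updateRow_smul]
  have hqj : q j = vdm κ' j a := det_updateRow_basis κ' j a
  have hqj0 : q j ≠ 0 := by rw [hqj]; exact hV
  have hQ0 : ∀ m, m < j → Q (a m) = 0 := by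
    intro m hm
    rw [hQ]
    simp only
    rw [vdm_update_eq]
    apply Matrix.det_zero_of_row_eq (i := (⟨m, by omega⟩ : Fin (j+1))) (j := Fin.last j)
    · intro h
      have := congrArg Fin.val h
      simp only [Fin.val_last] at this
      omega
    · rw [Matrix.updateRow_self, Matrix.updateRow_ne]
      · rfl
      · intro h
        have := congrArg Fin.val h
        simp only [Fin.val_last] at this
        omega
  set r : Fin j → ℂ := fun i => q j * d (i : ℕ) - d j * q (i : ℕ) with hr
  set V : Matrix (Fin j) (Fin j) ℂ :=
    Matrix.of fun M i : Fin j => mono κ' (i : ℕ) (a (M : ℕ)) with hVm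
  have hVdet : V.det = vdm κ' j a := rfl
  have hsplitD : ∀ y, ∑ i : Fin j, mono κ' (i : ℕ) y * d (i : ℕ)
      = D y - mono κ' j y * d j := by
    intro y
    rw [hDsum y, Finset.sum_range_succ, ← Fin.sum_univ_eq_sum_range]
    ring
  have hsplitQ : ∀ y, ∑ i : Fin j, mono κ' (i : ℕ) y * q (i : ℕ)
      = Q y - mono κ' j y * q j := by
    intro y
    rw [hQsum y, Finset.sum_range_succ, ← Fin.sum_univ_eq_sum_range]
    ring
  have hD0' : ∀ m, m < j → D (a m) = 0 := hD0
  have hmv : V.mulVec r = 0 := by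
    funext M
    show V.mulVec r M = (0 : ℂ)
    have h1 : V.mulVec r M = ∑ i : Fin j, mono κ' (i : ℕ) (a (M : ℕ)) * r i := rfl
    rw [h1]
    have h2 : ∑ i : Fin j, mono κ' (i : ℕ) (a (M : ℕ)) * r i =
        q j * (∑ i : Fin j, mono κ' (i : ℕ) (a (M : ℕ)) * d (i : ℕ)) -
        d j * (∑ i : Fin j, mono κ' (i : ℕ) (a (M : ℕ)) * q (i : ℕ)) := by
      rw [Finset.mul_sum, Finset.mul_sum, ← Finset.sum_sub_distrib]
      refine Finset.sum_congr rfl fun i _ => ?_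
      rw [hr]
      ring
    rw [h2, hsplitD, hsplitQ, hD0' (M : ℕ) M.isLt, hQ0 (M : ℕ) M.isLt]
    ring
  have hr0 : r = 0 := Matrix.eq_zero_of_mulVec_eq_zero (hVdet ▸ hV) hmv
  refine ⟨d j / q j, fun x => ?_⟩
  have key : q j * D x - d j * Q x = 0 := by
    have h2 : q j * D x - d j * Q x =
        q j * (∑ i : Fin j, mono κ' (i : ℕ) x * d (i : ℕ)) -
        d j * (∑ i : Fin j, mono κ' (i : ℕ) x * q (i : ℕ)) := by
      rw [hsplitD, hsplitQ]
      ring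
    rw [h2, Finset.mul_sum, Finset.mul_sum, ← Finset.sum_sub_distrib]
    refine Finset.sum_eq_zero fun i _ => ?_
    have : r i = 0 := congrFun hr0 i
    rw [hr] at this
    simp only at this
    ring_nf
    ring_nf at this
    linear_combination mono κ' (i:ℕ) x * this
  have : D x = d j / q j * Q x := by
    field_simp
    linear_combination key
  exact this



open MvPolynomial in
lemma determining_image2 {p₁ p₂ : ℕ} {K₁ : Set (Fin p₁ → ℂ)} {K₂ : Set (Fin p₂ → ℂ)}
    (h₁ : Determining K₁) (h₂ : Determining K₂) :
    Determining (Set.image2 Fin.append K₁ K₂) := by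
  intro P hP
  -- transfer to Sum index
  set e : Fin p₁ ⊕ Fin p₂ ≃ Fin (p₁ + p₂) := finSumFinEquiv with he
  set P' : MvPolynomial (Fin p₁ ⊕ Fin p₂) ℂ := rename e.symm P with hP'
  have heval : ∀ (z : Fin p₁ → ℂ) (w : Fin p₂ → ℂ),
      eval (Sum.elim z w) P' = eval (Fin.append z w) P := by
    intro z w
    rw [hP', eval_rename]
    have harg : (Sum.elim z w ∘ ⇑e.symm) = Fin.append z w := by
      funext i
      refine Fin.addCases (fun i₁ => ?_) (fun i₂ => ?_) i
      · simp [he, Fin.append_left]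
      · simp [he, Fin.append_right]
    rw [harg]
  set Q : MvPolynomial (Fin p₁) (MvPolynomial (Fin p₂) ℂ) := sumToIter ℂ _ _ P' with hQ
  have hcomm : ∀ (z : Fin p₁ → ℂ) (w : Fin p₂ → ℂ) (R : MvPolynomial (Fin p₁ ⊕ Fin p₂) ℂ),
      eval z (MvPolynomial.map (eval w) (sumToIter ℂ _ _ R)) = eval (Sum.elim z w) R := by
    intro z w
    have : ((eval z).comp ((MvPolynomial.map (eval w)).comp
        (sumToIter ℂ (Fin p₁) (Fin p₂) : MvPolynomial (Fin p₁ ⊕ Fin p₂) ℂ →+*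
          MvPolynomial (Fin p₁) (MvPolynomial (Fin p₂) ℂ)))) = eval (Sum.elim z w) := by
      apply ringHom_ext
      · intro c
        simp [sumToIter_C]
      · rintro (i | i)
        · simp [sumToIter_Xl]
        · simp [sumToIter_Xr]
    intro R
    exact congrArg (fun f => f R) this ▸ (RingHom.congr_fun this R)
  have hQzero : ∀ w ∈ K₂, MvPolynomial.map (eval w) Q = 0 := by
    intro w hw
    apply h₁
    intro z hz
    rw [hQ, hcomm z w P', heval]
    exact hP _ (Set.mem_image2_of_mem hz hw)
  have hQ0 : Q = 0 := by
    apply MvPolynomial.ext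
    intro α
    rw [coeff_zero]
    apply h₂
    intro w hw
    have := hQzero w hw
    have h := congrArg (coeff α) this
    rwa [coeff_map, coeff_zero] at h
  have hP'0 : P' = 0 := by
    have : Function.Injective (sumToIter ℂ (Fin p₁) (Fin p₂)) :=
      by
        have hext : sumToIter ℂ (Fin p₁) (Fin p₂) =
            (sumRingEquiv ℂ (Fin p₁) (Fin p₂)).toRingHom := by
          apply MvPolynomial.ringHom_ext
          · intro c; simp [sumToIter_C, sumRingEquiv_C]
          · rintro (i | i) <;> simp [sumToIter_Xl, sumToIter_Xr, sumRingEquiv_X_inl,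
              sumRingEquiv_X_inr]
        rw [hext]
        exact (sumRingEquiv ℂ (Fin p₁) (Fin p₂)).injective
    exact this (by rw [← hQ, hQ0, map_zero])
  have : Function.Injective (rename (R := ℂ) e.symm) := rename_injective _ e.symm.injective
  exact this (by rw [← hP', hP'0, map_zero])




lemma vdm_omega_ne_zero {p : ℕ} {κ : ℕ → Fin p → ℕ} (hκ : IsGLexEnum κ)
    {K : Set (Fin p → ℂ)} (hKd : Determining K) {ω : ℕ → Fin p → ℂ} {M : ℕ → ℝ}
    (hPL3 : ∀ j, 1 ≤ j → ∀ z ∈ K,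
      ‖vdm κ (j + 1) (Function.update ω j z)‖ ≤
        M j * ‖vdm κ (j + 1) ω‖) :
    ∀ n, vdm κ (n + 1) ω ≠ 0 := by
  intro n
  induction n with
  | zero => rw [vdm_one hκ.zero_eq]; exact one_ne_zero
  | succ n ih =>
    set cof : Fin (n+2) → ℂ := fun N => (-1) ^ ((n+1) + (N : ℕ)) *
      ((vmat κ (n+1) ω).submatrix Fin.castSucc N.succAbove).det with hcof
    have hexp : ∀ z, vdm κ (n+2) (Function.update ω (n+1) z) =
        ∑ N : Fin (n+2), cof N * mono κ (N : ℕ) z := by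
      intro z
      rw [vdm_update_eq κ (n+1) ω z, det_updateRow_last_expand]
      refine Finset.sum_congr rfl fun N _ => ?_
      rw [hcof]
      ring
    set P : MvPolynomial (Fin p) ℂ :=
      ∑ N : Fin (n+2), MvPolynomial.monomial (Finsupp.equivFunOnFinite.symm (κ (N : ℕ))) (cof N)
      with hPdef
    have hevalP : ∀ z, MvPolynomial.eval z P = vdm κ (n+2) (Function.update ω (n+1) z) := by
      intro z
      rw [hexp z, hPdef, map_sum]
      refine Finset.sum_congr rfl fun N _ => ?_
      rw [MvPolynomial.eval_monomial]
      congr 1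
      rw [mono, Finsupp.prod_fintype]
      · refine Finset.prod_congr rfl fun i _ => ?_
        simp
      · intro i
        exact pow_zero _
    have hcoflast : cof (Fin.last (n+1)) = vdm κ (n+1) ω := by
      rw [hcof]
      simp only [Fin.val_last, Fin.succAbove_last]
      rw [submatrix_vmat, Even.neg_one_pow ⟨n+1, rfl⟩, one_mul]
    have hPne : P ≠ 0 := by
      intro h0
      have hco : MvPolynomial.coeff (Finsupp.equivFunOnFinite.symm (κ (n+1))) P =
          cof (Fin.last (n+1)) := by
        rw [hPdef, MvPolynomial.coeff_sum]
        rw [Finset.sum_eq_single (Fin.last (n+1))]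
        · rw [MvPolynomial.coeff_monomial, if_pos]
          rw [Fin.val_last]
        · intro N _ hN
          rw [MvPolynomial.coeff_monomial, if_neg]
          intro h
          apply hN
          have h2 : κ (N : ℕ) = κ (n+1) := by
            have := Finsupp.equivFunOnFinite.symm.injective h
            exact this
          have h3 : (N : ℕ) = n + 1 := hκ.1.1 h2
          exact Fin.ext (by rw [h3, Fin.val_last])
        · intro h; exact absurd (Finset.mem_univ _) h
      rw [h0, MvPolynomial.coeff_zero] at hco
      rw [hcoflast] at hco
      exact ih hco.symm
    have hex : ∃ z ∈ K, MvPolynomial.eval z P ≠ 0 := by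
      by_contra h
      push_neg at h
      exact hPne (hKd P h)
    obtain ⟨z, hzK, hz⟩ := hex
    intro hvdm
    have hle := hPL3 (n+1) (by omega) z hzK
    rw [hvdm] at hle
    simp only [norm_zero, mul_zero] at hle
    rw [hevalP z] at hz
    have : ‖vdm κ (n + 1 + 1) (Function.update ω (n + 1) z)‖ > 0 :=
      norm_pos_iff.mpr hz
    linarith

lemma card_antidiagonalTuple (p s : ℕ) :
    (Finset.Nat.antidiagonalTuple p s).card = (p + s - 1).choose s := by
  classical
  rw [← Fintype.card_coe]
  have e : {x : Fin p → ℕ // x ∈ Finset.Nat.antidiagonalTuple p s} ≃ Sym (Fin p) s := by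
    refine Equiv.subtypeEquiv
      (Finsupp.equivFunOnFinite.symm.trans Multiset.toFinsupp.symm.toEquiv) (fun x => ?_)
    rw [Finset.Nat.mem_antidiagonalTuple]
    have hc : Multiset.card (Finsupp.toMultiset (Finsupp.equivFunOnFinite.symm x)) =
        ∑ i, x i := by
      rw [Finsupp.card_toMultiset, Finsupp.sum_fintype]
      · rfl
      · intro i; rfl
    constructor
    · intro h
      show Multiset.card _ = s
      rw [← h, ← hc]
      rfl
    · intro h
      have h' : Multiset.card (Finsupp.toMultiset (Finsupp.equivFunOnFinite.symm x)) = s := h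
      rw [hc] at h'
      exact h'
  rw [Fintype.card_congr e, Sym.card_sym_eq_choose]
  simp
lemma sum_choose_hdim {p : ℕ} (hp : 1 ≤ p) (d : ℕ) :
    ∑ s ∈ Finset.range (d+1), (p + s - 1).choose s = hdim p d := by
  obtain ⟨q, rfl⟩ : ∃ q, p = q + 1 := ⟨p - 1, by omega⟩
  induction d with
  | zero => simp [hdim]
  | succ d ih =>
      rw [Finset.sum_range_succ, ih]
      unfold hdim
      rw [show q + 1 + (d+1) - 1 = q + d + 1 by omega, show q+1+d = q+d+1 by omega,
        show q+1+(d+1) = q+d+2 by omega]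
      exact (Nat.choose_succ_succ (q+d+1) d).symm

/-- The finset of multi-indices with total degree at most `d`. -/
def degLE (p d : ℕ) : Finset (Fin p → ℕ) :=
  (Finset.range (d+1)).biUnion (Finset.Nat.antidiagonalTuple p)

lemma mem_degLE {p d : ℕ} {x : Fin p → ℕ} : x ∈ degLE p d ↔ ∑ i, x i ≤ d := by
  simp only [degLE, Finset.mem_biUnion, Finset.mem_range,
    Finset.Nat.mem_antidiagonalTuple]
  constructor
  · rintro ⟨s, hs, rfl⟩; omega
  · intro h; exact ⟨∑ i, x i, by omega, rfl⟩

lemma card_degLE {p : ℕ} (hp : 1 ≤ p) (d : ℕ) : (degLE p d).card = hdim p d := by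
  rw [degLE, Finset.card_biUnion, ← sum_choose_hdim hp d]
  · exact Finset.sum_congr rfl fun s _ => card_antidiagonalTuple p s
  · intro i _ j _ hij
    simp only [Finset.disjoint_left]
    intro x hx hx'
    rw [Finset.Nat.mem_antidiagonalTuple] at hx hx'
    omega

lemma enum_lt_hdim {p : ℕ} (hp : 1 ≤ p) {κ : ℕ → Fin p → ℕ} (hκ : IsGLexEnum κ)
    (d j : ℕ) : j < hdim p d ↔ ∑ i, κ j i ≤ d := by
  classical
  set σ : ℕ ≃ (Fin p → ℕ) := Equiv.ofBijective κ hκ.1 with hσ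
  set F : Finset ℕ := (degLE p d).image σ.symm with hF
  have hmemF : ∀ m, m ∈ F ↔ ∑ i, κ m i ≤ d := by
    intro m
    rw [hF, Finset.mem_image]
    constructor
    · rintro ⟨α, hα, rfl⟩
      have : κ (σ.symm α) = α := σ.apply_symm_apply α
      rw [← this] at hα
      exact mem_degLE.mp hα
    · intro h
      exact ⟨κ m, mem_degLE.mpr h, σ.symm_apply_apply m⟩
  have hdown : ∀ m n, m < n → n ∈ F → m ∈ F := by
    intro m n hmn hn
    rw [hmemF] at hn ⊢
    rcases hκ.2 m n hmn with h | ⟨h, -⟩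
    · omega
    · omega
  have hcard : F.card = hdim p d := by
    rw [hF, Finset.card_image_of_injective _ σ.symm.injective, card_degLE hp]
  have hrange : F = Finset.range F.card := by
    have hsub : F ⊆ Finset.range F.card := by
      intro x hx
      rw [Finset.mem_range]
      have hIcc : Finset.Icc 0 x ⊆ F := by
        intro y hy
        rw [Finset.mem_Icc] at hy
        rcases eq_or_lt_of_le hy.2 with rfl | hlt
        · exact hx
        · exact hdown y x hlt hx
      have := Finset.card_le_card hIcc
      rw [Nat.card_Icc] at this
      omega
    exact Finset.eq_of_subset_of_card_le hsub (by rw [Finset.card_range])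
  constructor
  · intro h
    rw [← hmemF]
    rw [hrange, Finset.mem_range, hcard]
    exact h
  · intro h
    rw [← hmemF, hrange, Finset.mem_range, hcard] at h
    exact h

lemma enum_block {p : ℕ} (hp : 1 ≤ p) {κ : ℕ → Fin p → ℕ} (hκ : IsGLexEnum κ)
    {d : ℕ} (hd : 1 ≤ d) (j : ℕ) :
    (hdim p (d-1) ≤ j ∧ j < hdim p d) ↔ ∑ i, κ j i = d := by
  have h1 := enum_lt_hdim hp hκ d j
  have h2 := enum_lt_hdim hp hκ (d-1) j
  constructor
  · rintro ⟨ha, hb⟩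
    have := h1.mp hb
    have h3 : ¬ (∑ i, κ j i ≤ d - 1) := fun h => by
      have := h2.mpr h
      omega
    omega
  · intro h
    constructor
    · by_contra hc
      push_neg at hc
      have := h2.mp (by omega)
      omega
    · exact h1.mpr (by omega)


lemma hdim_pos (p d : ℕ) : 1 ≤ hdim p d := Nat.choose_pos (by omega)

lemma hdim_lt {p : ℕ} (hp : 1 ≤ p) {d : ℕ} (hd : 1 ≤ d) : hdim p (d-1) < hdim p d := by
  obtain ⟨e, rfl⟩ : ∃ e, d = e + 1 := ⟨d-1, by omega⟩
  have h1 : hdim p (e+1) = (p+e).choose e + (p+e).choose (e+1) := by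
    unfold hdim
    rw [show p + (e+1) = (p+e)+1 by omega]
    exact Nat.choose_succ_succ (p+e) e
  have h2 : hdim p e = (p+e).choose e := rfl
  rw [show e+1-1 = e by omega, h1, h2]
  have : 0 < (p+e).choose (e+1) := Nat.choose_pos (by omega)
  omega

lemma limit_side {p p' : ℕ} (hp : 1 ≤ p) (hp' : 1 ≤ p')
    (N : ℕ → ℕ) (M : ℕ → ℝ)
    (hblock : ∀ d i, 1 ≤ d → i ∈ Set.Ico (hdim p' (d-1)) (hdim p' d) →
      N i ∈ Set.Ico (hdim p (d-1)) (hdim p d))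
    (hM1 : ∀ j, 1 ≤ j → 1 ≤ M j) (hN1 : ∀ i, 1 ≤ i → 1 ≤ N i)
    (hlim : Filter.Tendsto
      (fun d : ℕ => (sSup (M '' Set.Ico (hdim p (d-1)) (hdim p d))) ^ ((d:ℝ)⁻¹))
      Filter.atTop (nhds 1)) :
    Filter.Tendsto
      (fun d : ℕ => (sSup ((fun i => M (N i)) '' Set.Ico (hdim p' (d-1)) (hdim p' d))) ^ ((d:ℝ)⁻¹))
      Filter.atTop (nhds 1) := by
  set f : ℕ → ℝ := fun d => sSup ((fun i => M (N i)) '' Set.Ico (hdim p' (d-1)) (hdim p' d))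
    with hf
  set F : ℕ → ℝ := fun d => sSup (M '' Set.Ico (hdim p (d-1)) (hdim p d)) with hF
  have hbdd : ∀ (g : ℕ → ℝ) (A B : ℕ), BddAbove (g '' Set.Ico A B) :=
    fun g A B => ((Set.finite_Ico A B).image g).bddAbove
  have hmem₀ : ∀ d, 1 ≤ d → hdim p' (d-1) ∈ Set.Ico (hdim p' (d-1)) (hdim p' d) :=
    fun d hd => Set.mem_Ico.mpr ⟨le_refl _, hdim_lt hp' hd⟩
  have h1 : ∀ d, 1 ≤ d → 1 ≤ f d := by
    intro d hd
    have hM : 1 ≤ M (N (hdim p' (d-1))) := hM1 _ (hN1 _ (hdim_pos p' (d-1)))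
    refine le_trans hM (le_csSup (hbdd _ _ _) ?_)
    exact ⟨hdim p' (d-1), hmem₀ d hd, rfl⟩
  have h2 : ∀ d, 1 ≤ d → f d ≤ F d := by
    intro d hd
    refine csSup_le_csSup (hbdd _ _ _) ⟨M (N (hdim p' (d-1))), hdim p' (d-1), hmem₀ d hd, rfl⟩ ?_
    rintro x ⟨i, hi, rfl⟩
    exact ⟨N i, hblock d i hd hi, rfl⟩
  refine tendsto_of_tendsto_of_tendsto_of_le_of_le' (g := fun _ : ℕ => (1:ℝ))
    (h := fun d : ℕ => F d ^ ((d:ℝ)⁻¹)) tendsto_const_nhds hlim ?_ ?_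
  · filter_upwards [Filter.eventually_ge_atTop 1] with d hd
    calc (1:ℝ) = (1:ℝ) ^ ((d:ℝ)⁻¹) := (Real.one_rpow _).symm
    _ ≤ f d ^ ((d:ℝ)⁻¹) := Real.rpow_le_rpow zero_le_one (h1 d hd) (by positivity)
  · filter_upwards [Filter.eventually_ge_atTop 1] with d hd
    exact Real.rpow_le_rpow (le_trans zero_le_one (h1 d hd)) (h2 d hd) (by positivity)



lemma oneSided {p q : ℕ} {κ : ℕ → Fin p → ℕ}
    {κ' : ℕ → Fin q → ℕ} (hκ' : IsGLexEnum κ')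
    {K : Set (Fin p → ℂ)} {K' : Set (Fin q → ℂ)}
    {ω : ℕ → Fin p → ℂ} {M : ℕ → ℝ}
    (hW : ∀ n, vdm κ (n + 1) ω ≠ 0)
    (hPL3 : ∀ j, 1 ≤ j → ∀ z ∈ K,
      ‖vdm κ (j + 1) (Function.update ω j z)‖ ≤
        M j * ‖vdm κ (j + 1) ω‖)
    (a : ℕ → Fin q → ℂ) (N : ℕ → ℕ)
    (emb : (Fin q → ℂ) → (Fin p → ℂ)) (hembK : ∀ x ∈ K', emb x ∈ K)
    (g : ℕ → ℕ) (w : ℕ → ℂ)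
    (hmono : ∀ m x, mono κ m (emb x) = w m * mono κ' (g m) x)
    (hgle : ∀ j m, m ≤ N j → g m ≤ j)
    (hNlt : ∀ m j, m < j → N m < N j)
    (hN1 : ∀ j, 1 ≤ j → 1 ≤ N j)
    (hωemb : ∀ m, ω (N m) = emb (a m)) :
    (∀ j, vdm κ' (j + 1) a ≠ 0) ∧
    (∀ j, 1 ≤ j → ∀ x ∈ K',
      ‖vdm κ' (j + 1) (Function.update a j x)‖ ≤
        M (N j) * ‖vdm κ' (j + 1) a‖) := by
  have step : ∀ j, vdm κ' j a ≠ 0 → ∃ c : ℂ, c ≠ 0 ∧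
      (∀ x, vdm κ (N j + 1) (Function.update ω (N j) (emb x)) =
        c * vdm κ' (j+1) (Function.update a j x)) ∧
      vdm κ (N j + 1) ω = c * vdm κ' (j+1) a := by
    intro j hVj
    set n := N j with hn
    set A : Matrix (Fin (n+1)) (Fin (n+1)) ℂ := vmat κ n ω with hA
    set w' : Fin (n+1) → ℂ := fun m => w (m : ℕ) with hw'
    set g' : Fin (n+1) → ℕ := fun m => g (m : ℕ) with hg'
    have hg'le : ∀ m : Fin (n+1), g' m ≤ j := by
      intro m
      exact hgle j (m : ℕ) (by omega)
    have hDmatch : ∀ x, vdm κ (n+1) (Function.update ω n (emb x)) =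
        (A.updateRow (Fin.last n) (fun m => w' m * mono κ' (g' m) x)).det := by
      intro x
      rw [vdm_update_eq]
      have hrow : (fun N' : Fin (n+1) => mono κ (N' : ℕ) (emb x)) =
          (fun m => w' m * mono κ' (g' m) x) := funext fun m => hmono (m : ℕ) x
      rw [hrow]
    have hD0 : ∀ m, m < j →
        (A.updateRow (Fin.last n) (fun m' => w' m' * mono κ' (g' m') (a m))).det = 0 := by
      intro m hm
      rw [← hDmatch (a m), vdm_update_eq]
      have hNm : N m < n := hNlt m j hm
      apply Matrix.det_zero_of_row_eq (i := (⟨N m, by omega⟩ : Fin (n+1))) (j := Fin.last n)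
      · intro hcon
        have := congrArg Fin.val hcon
        simp only [Fin.val_last] at this
        omega
      · rw [Matrix.updateRow_ne, Matrix.updateRow_self]
        · show (fun N' : Fin (n+1) => mono κ (N' : ℕ) (ω (N m))) = _
          funext N'
          rw [hωemb m]
        · intro hcon
          have := congrArg Fin.val hcon
          simp only [Fin.val_last] at this
          omega
    obtain ⟨c, hc⟩ := core κ' j n A w' g' hg'le a hVj hD0
    have hx' : ∀ x, vdm κ (n + 1) (Function.update ω n (emb x)) =
        c * vdm κ' (j+1) (Function.update a j x) := fun x => (hDmatch x).trans (hc x)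
    have hωeq : vdm κ (n + 1) ω = c * vdm κ' (j+1) a := by
      have h := hx' (a j)
      rw [← hωemb j, Function.update_eq_self, Function.update_eq_self] at h
      exact h
    have hc0 : c ≠ 0 := by
      intro h0
      apply hW n
      rw [hωeq, h0, zero_mul]
    exact ⟨c, hc0, hx', hωeq⟩
  have vall : ∀ j, vdm κ' j a ≠ 0 := by
    intro j
    induction j with
    | zero => rw [vdm_zero]; exact one_ne_zero
    | succ j ih =>
        obtain ⟨c, hc0, -, hωeq⟩ := step j ih
        intro h0
        apply hW (N j)
        rw [hωeq, h0, mul_zero]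
  refine ⟨fun j => vall (j+1), fun j hj x hx => ?_⟩
  obtain ⟨c, hc0, hx', hωeq⟩ := step j (vall j)
  have hle := hPL3 (N j) (hN1 j hj) (emb x) (hembK x hx)
  rw [hx' x, hωeq, norm_mul, norm_mul] at hle
  have hcpos : 0 < ‖c‖ := norm_pos_iff.mpr hc0
  calc ‖vdm κ' (j + 1) (Function.update a j x)‖
      = (‖c‖ * ‖vdm κ' (j + 1) (Function.update a j x)‖) / ‖c‖ := by
        field_simp
    _ ≤ (M (N j) * (‖c‖ * ‖vdm κ' (j+1) a‖)) / ‖c‖ := by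
        apply div_le_div_of_nonneg_right hle hcpos.le
    _ = M (N j) * ‖vdm κ' (j+1) a‖ := by
        field_simp


lemma mono_append {p₁ p₂ : ℕ} {κ : ℕ → Fin (p₁ + p₂) → ℕ} {m m₁ m₂ : ℕ}
    {κ₁ : ℕ → Fin p₁ → ℕ} {κ₂ : ℕ → Fin p₂ → ℕ}
    (h : κ m = Fin.append (κ₁ m₁) (κ₂ m₂)) (z : Fin p₁ → ℂ) (w : Fin p₂ → ℂ) :
    mono κ m (Fin.append z w) = mono κ₁ m₁ z * mono κ₂ m₂ w := by
  rw [mono, h, Fin.prod_univ_add]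
  congr 1
  · refine Finset.prod_congr rfl fun i _ => ?_
    rw [Fin.append_left, Fin.append_left]
  · refine Finset.prod_congr rfl fun i _ => ?_
    rw [Fin.append_right, Fin.append_right]

/-- if the intertwining sequence `Ω = A ⊕ B` is a pseudo Leja sequence for
`K = K₁ × K₂` with Edrei growth `(M_j)`, then `A` is a pseudo Leja sequence for `K₁` with
Edrei growth `M'_i = M_{N(i)}` (where `φ(N(i)) = (i,0)`) and `B` is a pseudo Leja sequence
for `K₂` with Edrei growth `M''_i = M_{N'(i)}` (where `φ(N'(i)) = (0,i)`). -/
theorem intertwining_pseudoLeja_factors {p₁ p₂ : ℕ} (hp₁ : 1 ≤ p₁) (hp₂ : 1 ≤ p₂)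
    (κ₁ : ℕ → Fin p₁ → ℕ) (κ₂ : ℕ → Fin p₂ → ℕ) (κ : ℕ → Fin (p₁ + p₂) → ℕ)
    (hκ₁ : IsGLexEnum κ₁) (hκ₂ : IsGLexEnum κ₂) (hκ : IsGLexEnum κ)
    (φ₁ φ₂ : ℕ → ℕ)
    (hφ : ∀ j : ℕ, κ j = Fin.append (κ₁ (φ₁ j)) (κ₂ (φ₂ j)))
    (K₁ : Set (Fin p₁ → ℂ)) (K₂ : Set (Fin p₂ → ℂ))
    (hK₁c : IsCompact K₁) (hK₂c : IsCompact K₂)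
    (hK₁d : Determining K₁) (hK₂d : Determining K₂)
    (a : ℕ → Fin p₁ → ℂ) (b : ℕ → Fin p₂ → ℂ)
    (haK : ∀ j, a j ∈ K₁) (hbK : ∀ j, b j ∈ K₂)
    (ω : ℕ → Fin (p₁ + p₂) → ℂ)
    (hω : ∀ j : ℕ, ω j = Fin.append (a (φ₁ j)) (b (φ₂ j)))
    (M : ℕ → ℝ)
    (hPL : IsPseudoLeja κ (Set.image2 Fin.append K₁ K₂) ω M)
    (N N' : ℕ → ℕ)
    (hN : ∀ i : ℕ, φ₁ (N i) = i ∧ φ₂ (N i) = 0)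
    (hN' : ∀ i : ℕ, φ₁ (N' i) = 0 ∧ φ₂ (N' i) = i) :
    IsPseudoLeja κ₁ K₁ a (fun i => M (N i)) ∧
    IsPseudoLeja κ₂ K₂ b (fun i => M (N' i)) := by
  obtain ⟨hmem, hM1, hineq, hlim⟩ := hPL
  have hp : 1 ≤ p₁ + p₂ := by omega
  have hKd : Determining (Set.image2 Fin.append K₁ K₂) := determining_image2 hK₁d hK₂d
  have hW : ∀ n, vdm κ (n + 1) ω ≠ 0 := vdm_omega_ne_zero hκ hKd hineq
  have hφ0 : φ₁ 0 = 0 ∧ φ₂ 0 = 0 := by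
    have h0 := hφ 0
    rw [hκ.zero_eq] at h0
    obtain ⟨h1, h2⟩ := append_eq_zero h0.symm
    exact ⟨hκ₁.1.1 (h1.trans hκ₁.zero_eq.symm), hκ₂.1.1 (h2.trans hκ₂.zero_eq.symm)⟩
  -- Side A facts
  have hκN : ∀ i, κ (N i) = Fin.append (κ₁ i) (fun _ => 0) := by
    intro i
    rw [hφ (N i), (hN i).1, (hN i).2, hκ₂.zero_eq]
  have hNlt : ∀ m j, m < j → N m < N j := by
    intro m j h
    refine hκ.lt_iff.mp ?_
    rw [hκN m, hκN j]
    exact glex_append_left _ (hκ₁.lt_iff.mpr h)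
  have hN1 : ∀ j, 1 ≤ j → 1 ≤ N j := by
    intro j hj
    rcases Nat.eq_zero_or_pos (N j) with h0 | h0
    · exfalso
      have := (hN j).1
      rw [h0, hφ0.1] at this
      omega
    · exact h0
  have hgleA : ∀ j m, m ≤ N j → φ₁ m ≤ j := by
    intro j m hm
    by_contra hc
    push_neg at hc
    have h2 : GLexLT (κ (N j)) (κ m) := by
      rw [hκN j, hφ m]
      exact glex_append_left _ (hκ₁.lt_iff.mpr hc)
    have := hκ.lt_iff.mp h2
    omega
  have hωembA : ∀ m, ω (N m) = Fin.append (a m) (b 0) := by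
    intro m
    rw [hω (N m), (hN m).1, (hN m).2]
  have hmonoA : ∀ m x, mono κ m (Fin.append x (b 0)) =
      mono κ₂ (φ₂ m) (b 0) * mono κ₁ (φ₁ m) x := by
    intro m x
    rw [mono_append (hφ m)]
    ring
  obtain ⟨hAne, hAineq⟩ := oneSided hκ₁ hW hineq a N (fun x => Fin.append x (b 0))
    (fun x hx => Set.mem_image2_of_mem hx (hbK 0)) φ₁ (fun m => mono κ₂ (φ₂ m) (b 0))
    hmonoA hgleA hNlt hN1 hωembA
  -- Side B facts
  have hκN' : ∀ i, κ (N' i) = Fin.append (fun _ => 0) (κ₂ i) := by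
    intro i
    rw [hφ (N' i), (hN' i).1, (hN' i).2, hκ₁.zero_eq]
  have hNlt' : ∀ m j, m < j → N' m < N' j := by
    intro m j h
    refine hκ.lt_iff.mp ?_
    rw [hκN' m, hκN' j]
    exact glex_append_right _ (hκ₂.lt_iff.mpr h)
  have hN'1 : ∀ j, 1 ≤ j → 1 ≤ N' j := by
    intro j hj
    rcases Nat.eq_zero_or_pos (N' j) with h0 | h0
    · exfalso
      have := (hN' j).2
      rw [h0, hφ0.2] at this
      omega
    · exact h0
  have hgleB : ∀ j m, m ≤ N' j → φ₂ m ≤ j := by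
    intro j m hm
    by_contra hc
    push_neg at hc
    have h2 : GLexLT (κ (N' j)) (κ m) := by
      rw [hκN' j, hφ m]
      exact glex_append_right _ (hκ₂.lt_iff.mpr hc)
    have := hκ.lt_iff.mp h2
    omega
  have hωembB : ∀ m, ω (N' m) = Fin.append (a 0) (b m) := by
    intro m
    rw [hω (N' m), (hN' m).1, (hN' m).2]
  have hmonoB : ∀ m y, mono κ m (Fin.append (a 0) y) =
      mono κ₁ (φ₁ m) (a 0) * mono κ₂ (φ₂ m) y := by
    intro m y
    rw [mono_append (hφ m)]
  obtain ⟨hBne, hBineq⟩ := oneSided hκ₂ hW hineq b N' (fun y => Fin.append (a 0) y)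
    (fun y hy => Set.mem_image2_of_mem (haK 0) hy) φ₂ (fun m => mono κ₁ (φ₁ m) (a 0))
    hmonoB hgleB hNlt' hN'1 hωembB
  constructor
  · refine ⟨haK, fun j hj => hM1 (N j) (hN1 j hj), hAineq, ?_⟩
    refine limit_side hp hp₁ N M ?_ hM1 hN1 hlim
    intro d i hd hi
    rw [Set.mem_Ico] at hi
    have hsum : ∑ k, κ₁ i k = d := (enum_block hp₁ hκ₁ hd i).mp ⟨hi.1, hi.2⟩
    have hsum2 : ∑ k, κ (N i) k = d := by
      rw [hκN i, sum_append]
      simp [hsum]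
    exact Set.mem_Ico.mpr ((enum_block hp hκ hd (N i)).mpr hsum2)
  · refine ⟨hbK, fun j hj => hM1 (N' j) (hN'1 j hj), hBineq, ?_⟩
    refine limit_side hp hp₂ N' M ?_ hM1 hN'1 hlim
    intro d i hd hi
    rw [Set.mem_Ico] at hi
    have hsum : ∑ k, κ₂ i k = d := (enum_block hp₂ hκ₂ hd i).mp ⟨hi.1, hi.2⟩
    have hsum2 : ∑ k, κ (N' i) k = d := by
      rw [hκN' i, sum_append]
      simp [hsum]
    exact Set.mem_Ico.mpr ((enum_block hp hκ hd (N' i)).mpr hsum2)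

end PseudoLeja
end

section
/- Let K ⊆ ℂ^p be a determining compact set. Suppose that for each d ∈ ℕ we are given a finite subset A_d ⊆ K and a constant C_d ≥ 1 such that max_{z∈K} |P(z)| ≤ C_d·max_{a∈A_d} |P(a)| for every polynomial of total degree ≤ d, and that lim_{d→∞} C_d^{1/d} = 1 (a weakly admissible mesh). Choose ξ_0 ∈ A_0 arbitrarily, and for each d ≥ 1 and each N with h_{d−1} ≤ N < h_d choose ξ_N ∈ A_d with |vdm(ξ_0,…,ξ_{N−1}, ξ_N)| = max_{ξ∈A_d} |vdm(ξ_0,…,ξ_{N−1}, ξ)|. Then (ξ_N)_{N≥0} is a pseudo Leja sequence for K with Edrei growth (M̄_N)_{N≥1}, where M̄_N = C_d for h_{d−1} ≤ N < h_d. -/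
open scoped BigOperators
open Filter

namespace PseudoLeja

/-- The degree of the index `N`: the least `d` with `N < h_d`; for
`h_{d-1} ≤ N < h_d` this equals `d`. -/
noncomputable def degOf (p N : ℕ) : ℕ := sInf { d : ℕ | N < hdim p d }

-- counting lemmas
lemma sym_sum_count {q d : ℕ} (s : Sym (Fin (q+1)) d) :
    (∑ i : Fin q, Multiset.count i.castSucc (s : Multiset (Fin (q+1))))
      + Multiset.count (Fin.last q) (s : Multiset (Fin (q+1))) = d := by
  classical
  have h1 : ∑ a : Fin (q+1), Multiset.count a (s : Multiset (Fin (q+1)))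
      = Multiset.card (s : Multiset (Fin (q+1))) := by
    rw [← Multiset.toFinset_sum_count_eq]
    refine (Finset.sum_subset (Finset.subset_univ _) ?_).symm
    intro a _ ha
    exact Multiset.count_eq_zero_of_notMem (fun hm => ha (Multiset.mem_toFinset.2 hm))
  rw [Fin.sum_univ_castSucc] at h1
  rw [h1]
  exact s.2

lemma sym_count_inj {q d : ℕ} : Function.Injective
    (fun s : Sym (Fin (q+1)) d =>
      fun i : Fin q => Multiset.count i.castSucc (s : Multiset (Fin (q+1)))) := by
  intro s t h
  have hcs : ∀ i : Fin q, Multiset.count i.castSucc (s : Multiset (Fin (q+1)))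
      = Multiset.count i.castSucc (t : Multiset (Fin (q+1))) := fun i => congrFun h i
  have hlast : Multiset.count (Fin.last q) (s : Multiset (Fin (q+1)))
      = Multiset.count (Fin.last q) (t : Multiset (Fin (q+1))) := by
    have h1 := sym_sum_count s
    have h2 := sym_sum_count t
    have : (∑ i : Fin q, Multiset.count i.castSucc (s : Multiset (Fin (q+1))))
        = ∑ i : Fin q, Multiset.count i.castSucc (t : Multiset (Fin (q+1))) :=
      Finset.sum_congr rfl fun i _ => hcs i
    omega
  have : (s : Multiset (Fin (q+1))) = (t : Multiset (Fin (q+1))) := by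
    ext a
    refine Fin.lastCases ?_ ?_ a
    · exact hlast
    · exact fun i => hcs i
  exact Subtype.ext this

lemma hdim_succ_lt {p : ℕ} (hp : 1 ≤ p) (d : ℕ) : hdim p d < hdim p (d+1) := by
  have h : p + (d+1) = (p+d)+1 := by ring
  rw [hdim, hdim, h, Nat.choose_succ_succ]
  have : 0 < Nat.choose (p+d) d.succ := Nat.choose_pos (by omega)
  omega

lemma hdim_strictMono {p : ℕ} (hp : 1 ≤ p) : StrictMono (hdim p) :=
  strictMono_nat_of_lt_succ (hdim_succ_lt hp)

lemma hdim_zero (p : ℕ) : hdim p 0 = 1 := by simp [hdim]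

lemma lt_hdim_self {p : ℕ} (hp : 1 ≤ p) (d : ℕ) : d < hdim p d := by
  induction d with
  | zero => simp [hdim_zero]
  | succ n ih => have := hdim_succ_lt hp n; omega

lemma degOf_spec {p : ℕ} (hp : 1 ≤ p) (N : ℕ) : N < hdim p (degOf p N) :=
  Nat.sInf_mem (⟨N, lt_hdim_self hp N⟩ : { d : ℕ | N < hdim p d }.Nonempty)

lemma degOf_pos {p : ℕ} (hp : 1 ≤ p) {N : ℕ} (hN : 1 ≤ N) : 1 ≤ degOf p N := by
  by_contra h
  have h0 : degOf p N = 0 := by omega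
  have := degOf_spec hp N
  rw [h0, hdim_zero] at this
  omega

lemma degOf_lower {p : ℕ} (hp : 1 ≤ p) {N : ℕ} (hN : 1 ≤ N) :
    hdim p (degOf p N - 1) ≤ N := by
  by_contra h
  push_neg at h
  have h1 : degOf p N ≤ degOf p N - 1 := Nat.sInf_le h
  have h2 := degOf_pos hp hN
  omega

lemma degOf_eq {p : ℕ} (hp : 1 ≤ p) {d N : ℕ} (hd : 1 ≤ d)
    (h1 : hdim p (d-1) ≤ N) (h2 : N < hdim p d) : degOf p N = d := by
  have hle : degOf p N ≤ d := Nat.sInf_le h2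
  by_contra hne
  have hlt : degOf p N < d := lt_of_le_of_ne hle hne
  have : hdim p (degOf p N) ≤ hdim p (d-1) :=
    (hdim_strictMono hp).monotone (by omega)
  have := degOf_spec hp N
  omega

-- key degree bound
lemma deg_kappa_le {p : ℕ} {κ : ℕ → Fin p → ℕ} (hκ : IsGLexEnum κ)
    {N d : ℕ} (hN : N < hdim p d) : ∑ i, κ N i ≤ d := by
  classical
  by_contra h
  push_neg at h
  set e := Equiv.ofBijective κ hκ.1 with he
  have key : ∀ s : Sym (Fin (p+1)) d,
      e.symm (fun i : Fin p => Multiset.count i.castSucc (s : Multiset (Fin (p+1)))) < N := by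
    intro s
    by_contra hge
    push_neg at hge
    have hκm : κ (e.symm (fun i : Fin p => Multiset.count i.castSucc (s : Multiset (Fin (p+1)))))
        = fun i : Fin p => Multiset.count i.castSucc (s : Multiset (Fin (p+1))) :=
      e.apply_symm_apply _
    have hsum : ∑ i : Fin p, Multiset.count i.castSucc (s : Multiset (Fin (p+1))) ≤ d := by
      have := sym_sum_count s; omega
    rcases eq_or_lt_of_le hge with hEq | hlt
    · have hκN : κ N = fun i : Fin p => Multiset.count i.castSucc (s : Multiset (Fin (p+1))) := by
        rw [hEq]; exact hκm
      have h2 : ∑ i, κ N i ≤ d := by rw [hκN]; exact hsum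
      omega
    · have hg := hκ.2 N _ hlt
      rw [hκm] at hg
      simp only [GLexLT] at hg
      rcases hg with h2 | ⟨h2, -⟩
      · omega
      · omega
  have hinj : Function.Injective
      (fun s : Sym (Fin (p+1)) d => (⟨_, key s⟩ : Fin N)) := by
    intro s t hst
    have : e.symm (fun i : Fin p => Multiset.count i.castSucc (s : Multiset (Fin (p+1))))
        = e.symm (fun i : Fin p => Multiset.count i.castSucc (t : Multiset (Fin (p+1)))) := by
      simpa [Fin.ext_iff] using hst
    exact sym_count_inj (e.symm.injective this)
  have hcard := Fintype.card_le_of_injective _ hinj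
  rw [Sym.card_sym_eq_choose, Fintype.card_fin, Fintype.card_fin] at hcard
  have : p + 1 + d - 1 = p + d := by omega
  rw [this] at hcard
  rw [hdim] at hN
  omega

-- determinant polynomial
lemma exists_poly {p : ℕ} (κ : ℕ → Fin p → ℕ) (j d : ℕ)
    (hdeg : ∀ N : ℕ, N ≤ j → ∑ i, κ N i ≤ d) (ξ : ℕ → Fin p → ℂ) :
    ∃ P : MvPolynomial (Fin p) ℂ, P.totalDegree ≤ d ∧
      ∀ z, MvPolynomial.eval z P = vdm κ (j+1) (Function.update ξ j z) := by
  classical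
  set B : Matrix (Fin (j+1)) (Fin (j+1)) (MvPolynomial (Fin p) ℂ) :=
    Matrix.of fun M N : Fin (j+1) => if (M : ℕ) = j
      then ∏ i, MvPolynomial.X i ^ κ (N : ℕ) i
      else MvPolynomial.C (mono κ (N : ℕ) (ξ (M : ℕ))) with hB
  refine ⟨B.det, ?_, ?_⟩
  · rw [Matrix.det_apply']
    refine le_trans (MvPolynomial.totalDegree_finset_sum _ _)
      (Finset.sup_le fun σ _ => ?_)
    have hprod : (∏ i, B (σ i) i).totalDegree ≤ d := by
      refine le_trans (MvPolynomial.totalDegree_finset_prod _ _) ?_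
      have hb : ∀ i : Fin (j+1), (B (σ i) i).totalDegree
          ≤ if ((σ i : ℕ) = j) then d else 0 := by
        intro i
        by_cases hc : ((σ i : ℕ) = j)
        · simp only [hB, Matrix.of_apply, hc, if_true]
          refine le_trans (MvPolynomial.totalDegree_finset_prod _ _) ?_
          calc ∑ i', (MvPolynomial.X i' ^ κ (i : ℕ) i' : MvPolynomial (Fin p) ℂ).totalDegree
              ≤ ∑ i', κ (i : ℕ) i' * (MvPolynomial.X i' : MvPolynomial (Fin p) ℂ).totalDegree :=
                Finset.sum_le_sum fun i' _ => MvPolynomial.totalDegree_pow _ _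
            _ = ∑ i', κ (i : ℕ) i' := by simp [MvPolynomial.totalDegree_X]
            _ ≤ d := hdeg (i : ℕ) (Nat.lt_succ_iff.mp i.isLt)
        · simp only [hB, Matrix.of_apply, hc, if_false]
          simp [MvPolynomial.totalDegree_C]
      calc ∑ i, (B (σ i) i).totalDegree ≤ ∑ i, if ((σ i : ℕ) = j) then d else 0 :=
            Finset.sum_le_sum fun i _ => hb i
        _ = ∑ r : Fin (j+1), if ((r : ℕ) = j) then d else 0 := Equiv.sum_comp σ (fun r : Fin (j+1) => if (r : ℕ) = j then d else 0)
        _ = d := by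
            have hcond : ∀ r : Fin (j+1), ((r : ℕ) = j) ↔ r = Fin.last j := by
              intro r; simp [Fin.ext_iff]
            simp only [hcond]
            simp
    rcases Int.units_eq_one_or (Equiv.Perm.sign σ) with hs | hs <;> rw [hs]
    · simpa using hprod
    · simpa [neg_one_mul] using hprod
  · intro z
    have hmap : (MvPolynomial.eval z) B.det = ((MvPolynomial.eval z).mapMatrix B).det :=
      RingHom.map_det _ _
    rw [hmap, vdm]
    congr 1
    ext M N
    by_cases hM : (M : ℕ) = j <;>
      simp [hB, hM, Function.update_apply, mono, map_prod, map_pow]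


/-- a weakly admissible mesh `(A_d, C_d)` for `K` yields, by discrete Leja
extraction, a pseudo Leja sequence for `K` with Edrei growth `M̄_N = C_d` for
`h_{d-1} ≤ N < h_d`. -/
theorem weakly_admissible_mesh_gives_pseudoLeja {p : ℕ} (hp : 1 ≤ p)
    (κ : ℕ → Fin p → ℕ) (hκ : IsGLexEnum κ)
    (K : Set (Fin p → ℂ)) (hKc : IsCompact K) (hKd : Determining K)
    (A : ℕ → Set (Fin p → ℂ)) (hAfin : ∀ d, (A d).Finite) (hAK : ∀ d, A d ⊆ K)
    (C : ℕ → ℝ) (hC1 : ∀ d, 1 ≤ C d)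
    (hCnorm : ∀ d : ℕ, ∀ P : MvPolynomial (Fin p) ℂ, P.totalDegree ≤ d → ∀ z ∈ K,
      ‖MvPolynomial.eval z P‖ ≤
        C d * sSup ((fun a => ‖MvPolynomial.eval a P‖) '' A d))
    (hCgrowth : Filter.Tendsto (fun d : ℕ => C d ^ ((d : ℝ)⁻¹)) Filter.atTop (nhds 1))
    (ξ : ℕ → Fin p → ℂ) (hξ0 : ξ 0 ∈ A 0)
    (hξmem : ∀ d : ℕ, 1 ≤ d → ∀ N : ℕ, hdim p (d - 1) ≤ N → N < hdim p d → ξ N ∈ A d)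
    (hξmax : ∀ d : ℕ, 1 ≤ d → ∀ N : ℕ, hdim p (d - 1) ≤ N → N < hdim p d → ∀ a ∈ A d,
      ‖vdm κ (N + 1) (Function.update ξ N a)‖ ≤
        ‖vdm κ (N + 1) ξ‖) :
    IsPseudoLeja κ K ξ (fun N => C (degOf p N)) := by
  classical
  have hd1 : ∀ j : ℕ, 1 ≤ j → 1 ≤ degOf p j := fun j hj => degOf_pos hp hj
  have hspec : ∀ j : ℕ, j < hdim p (degOf p j) := fun j => degOf_spec hp j
  have hlow : ∀ j : ℕ, 1 ≤ j → hdim p (degOf p j - 1) ≤ j := fun j hj => degOf_lower hp hj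
  refine ⟨?_, ?_, ?_, ?_⟩
  · intro j
    rcases Nat.eq_zero_or_pos j with rfl | hj
    · exact hAK 0 hξ0
    · exact hAK _ (hξmem _ (hd1 j hj) j (hlow j hj) (hspec j))
  · intro j _
    exact hC1 _
  · intro j hj z hz
    have hdegs : ∀ N : ℕ, N ≤ j → ∑ i, κ N i ≤ degOf p j := fun N hN =>
      deg_kappa_le hκ (lt_of_le_of_lt hN (hspec j))
    obtain ⟨P, hPdeg, hPev⟩ := exists_poly κ j (degOf p j) hdegs ξ
    have h1 := hCnorm (degOf p j) P hPdeg z hz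
    rw [hPev z] at h1
    refine le_trans h1 ?_
    have h2 : sSup ((fun a => ‖MvPolynomial.eval a P‖) '' A (degOf p j))
        ≤ ‖vdm κ (j + 1) ξ‖ := by
      refine Real.sSup_le ?_ (norm_nonneg _)
      rintro x ⟨a, ha, rfl⟩
      simp only [hPev]
      exact hξmax (degOf p j) (hd1 j hj) j (hlow j hj) (hspec j) a ha
    exact mul_le_mul_of_nonneg_left h2 (le_trans zero_le_one (hC1 _))
  · refine Filter.Tendsto.congr' ?_ hCgrowth
    filter_upwards [Filter.eventually_ge_atTop 1] with d hd
    have hlt : hdim p (d - 1) < hdim p d := hdim_strictMono hp (by omega)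
    have himg : (fun N => C (degOf p N)) '' Set.Ico (hdim p (d - 1)) (hdim p d)
        = {C d} := by
      ext x
      constructor
      · rintro ⟨N, ⟨h1, h2⟩, rfl⟩
        simp [degOf_eq hp hd h1 h2]
      · intro hx
        rw [Set.mem_singleton_iff] at hx
        exact ⟨hdim p (d - 1), ⟨le_refl _, hlt⟩, by
          rw [hx]; simp [degOf_eq hp hd (le_refl _) hlt]⟩
    rw [himg, csSup_singleton]


end PseudoLeja
end
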